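/- Degeneration of Gamma laws to exponential laws: fix μ > 0. For β > 0 let ν_β be the pushforward of the Gamma(βμ) distribution under the map x ↦ −β·log x. Then ν_β converges weakly (in distribution) to the exponential distribution Exp(μ) as β → 0⁺; equivalently, for every bounded continuous f : ℝ → ℝ, ∫₀^∞ f(−β·log x)·x^{βμ−1}e^{−x}/Γ(βμ) dx → ∫₀^∞ f(y)·μ·e^{−μy} dy. -/

import Mathlib

open MeasureTheory Filter Topology

/-- The Gamma(`a`) probability measure on `ℝ`, with density `x^{a-1}e^{-x}/Γ(a)` on `(0,∞)`. -/
noncomputable def gammaLaw (a : ℝ) : Measure ℝ :=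
  volume.withDensity fun x =>
    ENNReal.ofReal (if 0 < x then x ^ (a - 1) * Real.exp (-x) / Real.Gamma a else 0)

/-- The exponential probability measure on `ℝ` with rate `a`. -/
noncomputable def expLaw (a : ℝ) : Measure ℝ :=
  volume.withDensity fun x =>
    ENNReal.ofReal (if 0 < x then a * Real.exp (-(a * x)) else 0)

/-! Auxiliary lemmas -/

lemma aux_image (β : ℝ) (hβ : 0 < β) :
    (fun y : ℝ => Real.exp (-y / β)) '' Set.univ = Set.Ioi 0 := by
  rw [Set.image_univ, show (fun y : ℝ => Real.exp (-y / β)) = Real.exp ∘ (fun y => -y / β) from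
    rfl, Set.range_comp]
  have hsurj : Function.Surjective (fun y : ℝ => -y / β) := fun c =>
    ⟨-(c * β), by field_simp⟩
  rw [Set.range_eq_univ.mpr hsurj, Set.image_univ, Real.range_exp]

lemma aux_deriv (β : ℝ) (hβ : 0 < β) (y : ℝ) :
    HasDerivAt (fun y : ℝ => Real.exp (-y / β)) (Real.exp (-y / β) * (-1 / β)) y := by
  have h : HasDerivAt (fun y : ℝ => -y / β) (-1 / β) y := by
    simpa using ((hasDerivAt_id y).neg.div_const β)
  exact h.exp

lemma aux_inj (β : ℝ) (hβ : 0 < β) :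
    Set.InjOn (fun y : ℝ => Real.exp (-y / β)) Set.univ := by
  intro a _ b _ h
  have := Real.exp_injective h
  field_simp at this
  linarith

/-- Change of variables `x = exp(-y/β)`. -/
lemma aux_subst_integral (β : ℝ) (hβ : 0 < β) (g : ℝ → ℝ) :
    ∫ x in Set.Ioi (0:ℝ), g x
      = ∫ y : ℝ, (Real.exp (-y / β) / β) * g (Real.exp (-y / β)) := by
  rw [← aux_image β hβ,
    integral_image_eq_integral_abs_deriv_smul MeasurableSet.univ
      (fun y _ => (aux_deriv β hβ y).hasDerivWithinAt) (aux_inj β hβ) g]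
  rw [Measure.restrict_univ]
  congr 1
  ext y
  rw [smul_eq_mul, abs_mul, abs_of_pos (Real.exp_pos _),
    abs_of_neg (div_neg_of_neg_of_pos (by norm_num) hβ)]
  ring

lemma aux_subst_integrable (β : ℝ) (hβ : 0 < β) (g : ℝ → ℝ) :
    IntegrableOn g (Set.Ioi (0:ℝ)) ↔
      Integrable (fun y : ℝ => (Real.exp (-y / β) / β) * g (Real.exp (-y / β))) := by
  rw [← aux_image β hβ,
    integrableOn_image_iff_integrableOn_abs_deriv_smul MeasurableSet.univ
      (fun y _ => (aux_deriv β hβ y).hasDerivWithinAt) (aux_inj β hβ) g]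
  rw [IntegrableOn, Measure.restrict_univ]
  constructor <;> intro h <;> refine h.congr (Filter.Eventually.of_forall fun y => ?_) <;>
    simp only [smul_eq_mul, abs_mul, abs_of_pos (Real.exp_pos _),
      abs_of_neg (div_neg_of_neg_of_pos (by norm_num : (-1:ℝ) < 0) hβ)] <;> ring


/-- Pointwise computation after substitution. -/
lemma aux_comp (μ β : ℝ) (hβ : 0 < β) (hμ : 0 < μ) (f : ℝ → ℝ) (y : ℝ) :
    (Real.exp (-y / β) / β) *
        (f (-β * Real.log (Real.exp (-y / β))) *
          (Real.exp (-y / β) ^ (β * μ - 1) * Real.exp (-Real.exp (-y / β)) /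
            Real.Gamma (β * μ)))
      = f y * (μ * Real.exp (-μ * y) * Real.exp (-Real.exp (-y / β)) /
          Real.Gamma (β * μ + 1)) := by
  have hβμ : 0 < β * μ := mul_pos hβ hμ
  have h1 : -β * Real.log (Real.exp (-y / β)) = y := by
    rw [Real.log_exp]; field_simp
  have h2 : Real.exp (-y / β) ^ (β * μ - 1) = Real.exp (-y / β * (β * μ - 1)) :=
    (Real.exp_mul _ _).symm
  have h3 : Real.exp (-y / β) * Real.exp (-y / β * (β * μ - 1)) = Real.exp (-μ * y) := by
    rw [← Real.exp_add]; congr 1; field_simp; ring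
  have hΓ : Real.Gamma (β * μ + 1) = (β * μ) * Real.Gamma (β * μ) :=
    Real.Gamma_add_one (ne_of_gt hβμ)
  have hΓpos : 0 < Real.Gamma (β * μ) := Real.Gamma_pos_of_pos hβμ
  rw [h1, h2, hΓ, ← h3]
  field_simp

/-- Integrability of the dominating function. -/
lemma aux_bound_integrable (μ β : ℝ) (hβ : 0 < β) (hμ : 0 < μ) :
    Integrable (fun y : ℝ => Real.exp (-(μ * y)) * Real.exp (-Real.exp (-y / β))) := by
  have h := (aux_subst_integrable β hβ
    (fun x => Real.exp (-x) * x ^ (β * μ - 1))).mp (Real.GammaIntegral_convergent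
      (mul_pos hβ hμ))
  have h2 := h.const_mul β
  refine h2.congr (Filter.Eventually.of_forall fun y => ?_)
  have h3 : Real.exp (-y / β) ^ (β * μ - 1) = Real.exp (-y / β * (β * μ - 1)) :=
    (Real.exp_mul _ _).symm
  have h4 : Real.exp (-y / β) * Real.exp (-y / β * (β * μ - 1)) = Real.exp (-(μ * y)) := by
    rw [← Real.exp_add]; congr 1; field_simp; ring
  dsimp only
  rw [h3, ← h4]
  field_simp


lemma aux_key (μ : ℝ) (hμ : 0 < μ) (f : ℝ → ℝ) (hf : Continuous f) (M : ℝ)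
    (hfb : ∀ x, |f x| ≤ M) :
    Filter.Tendsto (fun β : ℝ => ∫ x in Set.Ioi (0:ℝ),
        f (-β * Real.log x) * (x ^ (β * μ - 1) * Real.exp (-x) / Real.Gamma (β * μ)))
      (𝓝[>] 0) (𝓝 (∫ y in Set.Ioi (0:ℝ), f y * (μ * Real.exp (-μ * y)))) := by
  have hM : 0 ≤ M := le_trans (abs_nonneg _) (hfb 0)
  -- Gamma continuity at 1
  have hΓcont : Tendsto (fun β : ℝ => Real.Gamma (β * μ + 1)) (𝓝 0) (𝓝 1) := by
    have h1 : ContinuousAt Real.Gamma 1 := by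
      refine (Real.differentiableAt_Gamma fun m => ?_).continuousAt
      have : (-(m:ℝ)) ≤ 0 := neg_nonpos.mpr (Nat.cast_nonneg m)
      exact ne_of_gt (by linarith)
    have h2 : Tendsto (fun β : ℝ => β * μ + 1) (𝓝 0) (𝓝 1) := by
      have hc : Continuous (fun β : ℝ => β * μ + 1) := by continuity
      simpa using hc.tendsto 0
    simpa [Function.comp_def] using h1.tendsto.comp h2
  obtain ⟨ε, hε, hball⟩ := Metric.eventually_nhds_iff.mp (hΓcont.eventually
    (eventually_gt_nhds (by norm_num : (1:ℝ)/2 < 1)))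
  set β₀ : ℝ := ε / 2 with hβ₀def
  have hβ₀ : 0 < β₀ := by positivity
  have hΓ2 : ∀ β ∈ Set.Ioc (0:ℝ) β₀, 1/2 < Real.Gamma (β * μ + 1) := by
    intro β hβ
    refine hball ?_
    rw [Real.dist_eq, sub_zero, abs_of_pos hβ.1]
    have := hβ.2
    rw [hβ₀def] at this
    linarith
  -- dominating function
  have hbound_int : Integrable (fun y : ℝ => (2 * Real.exp 1 * M * μ) *
      (Real.exp (-(μ * y)) * Real.exp (-Real.exp (-y / β₀)))) :=
    (aux_bound_integrable μ β₀ hβ₀ hμ).const_mul _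
  -- eventual equality with the substituted integral
  have heq : ∀ᶠ β in 𝓝[>] (0:ℝ),
      (∫ x in Set.Ioi (0:ℝ),
        f (-β * Real.log x) * (x ^ (β * μ - 1) * Real.exp (-x) / Real.Gamma (β * μ)))
      = ∫ y : ℝ, f y * (μ * Real.exp (-μ * y) * Real.exp (-Real.exp (-y / β)) /
          Real.Gamma (β * μ + 1)) := by
    filter_upwards [self_mem_nhdsWithin] with β hβ
    rw [aux_subst_integral β hβ]
    congr 1
    funext y
    exact aux_comp μ β hβ hμ f y
  rw [show (∫ y in Set.Ioi (0:ℝ), f y * (μ * Real.exp (-μ * y)))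
      = ∫ y : ℝ, Set.indicator (Set.Ioi (0:ℝ))
          (fun y => f y * (μ * Real.exp (-μ * y))) y from
    (integral_indicator measurableSet_Ioi).symm]
  refine (tendsto_congr' heq).mpr ?_
  refine tendsto_integral_filter_of_dominated_convergence
    (fun y : ℝ => (2 * Real.exp 1 * M * μ) *
      (Real.exp (-(μ * y)) * Real.exp (-Real.exp (-y / β₀)))) ?_ ?_ hbound_int ?_
  · refine Filter.Eventually.of_forall fun β => Continuous.aestronglyMeasurable ?_
    fun_prop
  · filter_upwards [Ioc_mem_nhdsGT hβ₀] with β hβ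
    refine Filter.Eventually.of_forall fun y => ?_
    have hΓβ : 1/2 < Real.Gamma (β * μ + 1) := hΓ2 β hβ
    have hB : Real.exp (-Real.exp (-y / β)) ≤ Real.exp 1 * Real.exp (-Real.exp (-y / β₀)) := by
      rw [← Real.exp_add, Real.exp_le_exp]
      rcases le_or_gt 0 y with hy | hy
      · have h1 : Real.exp (-y / β₀) ≤ 1 := by
          rw [Real.exp_le_one_iff]
          have : 0 ≤ y / β₀ := div_nonneg hy hβ₀.le
          rw [neg_div]; linarith
        have h2 : (0:ℝ) < Real.exp (-y / β) := Real.exp_pos _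
        linarith
      · have h1 : -y / β₀ ≤ -y / β :=
          div_le_div_of_nonneg_left (by linarith) hβ.1 hβ.2
        have h2 := Real.exp_le_exp.mpr h1
        linarith
    calc ‖f y * (μ * Real.exp (-μ * y) * Real.exp (-Real.exp (-y / β)) /
            Real.Gamma (β * μ + 1))‖
        = |f y| * (μ * Real.exp (-μ * y) * Real.exp (-Real.exp (-y / β)) /
            Real.Gamma (β * μ + 1)) := by
          rw [Real.norm_eq_abs, abs_mul, abs_of_nonneg (show
            (0:ℝ) ≤ μ * Real.exp (-μ * y) * Real.exp (-Real.exp (-y / β)) /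
              Real.Gamma (β * μ + 1) from div_nonneg (by positivity) (by linarith))]
      _ ≤ M * (μ * Real.exp (-μ * y) * (Real.exp 1 * Real.exp (-Real.exp (-y / β₀))) /
            (1/2)) := by
          gcongr
          exact hfb y
      _ = (2 * Real.exp 1 * M * μ) *
            (Real.exp (-(μ * y)) * Real.exp (-Real.exp (-y / β₀))) := by
          rw [neg_mul]
          ring
  · have h0 : ∀ᵐ y : ℝ, y ≠ (0:ℝ) := by
      refine ae_iff.mpr ?_
      simp
    filter_upwards [h0] with y hy
    have hG : Tendsto (fun β : ℝ => Real.Gamma (β * μ + 1)) (𝓝[>] 0) (𝓝 1) :=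
      hΓcont.mono_left nhdsWithin_le_nhds
    rcases hy.lt_or_gt with hylt | hygt
    · -- y < 0 : inner exp → ∞, outer → 0
      have hexp : Tendsto (fun β : ℝ => Real.exp (-y / β)) (𝓝[>] 0) atTop := by
        have h1 : Tendsto (fun β : ℝ => -y * β⁻¹) (𝓝[>] (0:ℝ)) atTop :=
          Tendsto.const_mul_atTop (by linarith) tendsto_inv_nhdsGT_zero
        have h2 : Tendsto (fun β : ℝ => -y / β) (𝓝[>] (0:ℝ)) atTop :=
          h1.congr fun β => (div_eq_mul_inv _ _).symm
        exact Real.tendsto_exp_atTop.comp h2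
      have hB : Tendsto (fun β : ℝ => Real.exp (-Real.exp (-y / β))) (𝓝[>] 0) (𝓝 0) :=
        Real.tendsto_exp_atBot.comp (tendsto_neg_atTop_atBot.comp hexp)
      have := (tendsto_const_nhds (x := f y)).mul
        (((tendsto_const_nhds (x := μ * Real.exp (-μ * y))).mul hB).div hG one_ne_zero)
      have h3 : Set.indicator (Set.Ioi (0:ℝ)) (fun y => f y * (μ * Real.exp (-μ * y))) y
          = 0 := Set.indicator_of_notMem (by simpa using hylt.le) _
      rw [h3]
      simpa using this
    · -- y > 0 : inner exp → 0, outer → 1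
      have hexp : Tendsto (fun β : ℝ => Real.exp (-y / β)) (𝓝[>] 0) (𝓝 0) := by
        have h1 : Tendsto (fun β : ℝ => y * β⁻¹) (𝓝[>] (0:ℝ)) atTop :=
          Tendsto.const_mul_atTop hygt tendsto_inv_nhdsGT_zero
        have h2 : Tendsto (fun β : ℝ => -y / β) (𝓝[>] (0:ℝ)) atBot :=
          (tendsto_neg_atTop_atBot.comp h1).congr fun β => by
            simp [neg_div, div_eq_mul_inv]
        exact Real.tendsto_exp_atBot.comp h2
      have hexp' : Tendsto (fun β : ℝ => -Real.exp (-y / β)) (𝓝[>] 0) (𝓝 0) := by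
        simpa using hexp.neg
      have hB : Tendsto (fun β : ℝ => Real.exp (-Real.exp (-y / β))) (𝓝[>] 0) (𝓝 1) := by
        simpa [Function.comp_def] using (Real.continuous_exp.tendsto 0).comp hexp'
      have := (tendsto_const_nhds (x := f y)).mul
        (((tendsto_const_nhds (x := μ * Real.exp (-μ * y))).mul hB).div hG one_ne_zero)
      have h3 : Set.indicator (Set.Ioi (0:ℝ)) (fun y => f y * (μ * Real.exp (-μ * y))) y
          = f y * (μ * Real.exp (-μ * y)) := Set.indicator_of_mem hygt _
      rw [h3]
      simpa using this


lemma aux_withDensity (r : ℝ → ℝ) (hr : Measurable r) (hr0 : ∀ x, 0 ≤ r x) (g : ℝ → ℝ) :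
    ∫ x, g x ∂(volume.withDensity fun x => ENNReal.ofReal (r x)) = ∫ x, r x * g x := by
  rw [show (fun x => ENNReal.ofReal (r x)) = (fun x => ((r x).toNNReal : ENNReal)) from rfl,
    integral_withDensity_eq_integral_smul hr.real_toNNReal g]
  congr 1
  funext x
  simp [NNReal.smul_def, Real.coe_toNNReal _ (hr0 x)]

lemma gamma_integral_eq (a : ℝ) (ha : 0 < a) (g : ℝ → ℝ) :
    ∫ x, g x ∂(gammaLaw a)
      = ∫ x in Set.Ioi (0:ℝ), g x * (x ^ (a - 1) * Real.exp (-x) / Real.Gamma a) := by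
  have hr : Measurable (fun x : ℝ =>
      if 0 < x then x ^ (a - 1) * Real.exp (-x) / Real.Gamma a else 0) := by
    refine Measurable.ite ?_ ?_ measurable_const
    · exact measurableSet_Ioi
    · fun_prop
  have hr0 : ∀ x : ℝ, 0 ≤ if 0 < x then x ^ (a - 1) * Real.exp (-x) / Real.Gamma a else 0 := by
    intro x
    split_ifs with h
    · exact div_nonneg (by positivity) (Real.Gamma_pos_of_pos ha).le
    · exact le_refl 0
  rw [gammaLaw, aux_withDensity _ hr hr0 g, ← integral_indicator measurableSet_Ioi]
  congr 1
  funext x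
  by_cases hx : 0 < x
  · rw [Set.indicator_of_mem (Set.mem_Ioi.mpr hx), if_pos hx]
    ring
  · rw [Set.indicator_of_notMem (by simpa using hx), if_neg hx, zero_mul]

lemma exp_integral_eq (μ : ℝ) (hμ : 0 < μ) (g : ℝ → ℝ) :
    ∫ x, g x ∂(expLaw μ)
      = ∫ x in Set.Ioi (0:ℝ), g x * (μ * Real.exp (-μ * x)) := by
  have hr : Measurable (fun x : ℝ => if 0 < x then μ * Real.exp (-(μ * x)) else 0) := by
    refine Measurable.ite ?_ ?_ measurable_const
    · exact measurableSet_Ioi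
    · fun_prop
  have hr0 : ∀ x : ℝ, 0 ≤ if 0 < x then μ * Real.exp (-(μ * x)) else 0 := by
    intro x
    split_ifs with h
    · positivity
    · exact le_refl 0
  rw [expLaw, aux_withDensity _ hr hr0 g, ← integral_indicator measurableSet_Ioi]
  congr 1
  funext x
  by_cases hx : 0 < x
  · rw [Set.indicator_of_mem (Set.mem_Ioi.mpr hx), if_pos hx, neg_mul]
    ring
  · rw [Set.indicator_of_notMem (by simpa using hx), if_neg hx, zero_mul]

/-- Degeneration of Gamma laws to exponential laws: the pushforward of Gamma(βμ) under
`x ↦ -β·log x` converges in distribution, as `β → 0⁺`, to Exp(μ). -/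
theorem gamma_degenerates_to_exponential (μ : ℝ) (hμ : 0 < μ)
    (f : ℝ → ℝ) (hf : Continuous f) (hfb : ∃ M, ∀ x, |f x| ≤ M) :
    Tendsto (fun β : ℝ =>
        ∫ y, f y ∂(Measure.map (fun x => -β * Real.log x) (gammaLaw (β * μ))))
      (𝓝[>] 0) (𝓝 (∫ y, f y ∂(expLaw μ))) ∧
    Tendsto (fun β : ℝ => ∫ x in Set.Ioi (0:ℝ),
        f (-β * Real.log x) * (x ^ (β * μ - 1) * Real.exp (-x) / Real.Gamma (β * μ)))
      (𝓝[>] 0) (𝓝 (∫ y in Set.Ioi (0:ℝ), f y * (μ * Real.exp (-μ * y)))) := by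
  obtain ⟨M, hfb⟩ := hfb
  have hkey := aux_key μ hμ f hf M hfb
  refine ⟨?_, hkey⟩
  have heq : ∀ᶠ β in 𝓝[>] (0:ℝ),
      (∫ y, f y ∂(Measure.map (fun x => -β * Real.log x) (gammaLaw (β * μ))))
        = ∫ x in Set.Ioi (0:ℝ),
            f (-β * Real.log x) * (x ^ (β * μ - 1) * Real.exp (-x) / Real.Gamma (β * μ)) := by
    filter_upwards [self_mem_nhdsWithin] with β hβ
    have hφ : Measurable (fun x : ℝ => -β * Real.log x) :=
      measurable_const.mul Real.measurable_log
    rw [integral_map hφ.aemeasurable hf.aestronglyMeasurable,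
      gamma_integral_eq (β * μ) (mul_pos hβ hμ) (fun x => f (-β * Real.log x))]
  rw [exp_integral_eq μ hμ f]
  exact (tendsto_congr' heq).mpr hkey
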